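/- Let χ : [0,1] → ℝ be continuously differentiable with χ ≥ 0, let α > 0 and ε > 0, let g : [0,1] → ℝ be continuous, and let p, T : [0,1] → ℝ be twice continuously differentiable with p(1) = 0 and T(1) = 0, satisfying for all x ∈ [0,1] the identity α⁻¹·p(x)·x − (d/dx)(x·χ(x)·p'(x)) = (d/dx)(x·χ(x)·T'(x)) − g(x)·x. Then 2·(α⁻¹ − ε)·∫₀¹ p(x)²·x dx + ∫₀¹ χ(x)·(p'(x))²·x dx ≤ ∫₀¹ χ(x)·(T'(x))²·x dx + (1/(2ε))·∫₀¹ g(x)²·x dx. -/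

import Mathlib

lemma ibp_zero_aux (u v u' v' : ℝ → ℝ)
    (hu : ContinuousOn u (Set.Icc 0 1)) (hv : ContinuousOn v (Set.Icc 0 1))
    (hud : ∀ x ∈ Set.Ioo (0:ℝ) 1, HasDerivAt u (u' x) x)
    (hvd : ∀ x ∈ Set.Ioo (0:ℝ) 1, HasDerivAt v (v' x) x)
    (hint : IntervalIntegrable (fun x => u' x * v x + u x * v' x) MeasureTheory.volume 0 1)
    (hbv1 : u 1 * v 1 = 0) (hbv0 : u 0 * v 0 = 0) :
    (∫ x in (0:ℝ)..1, (u' x * v x + u x * v' x)) = 0 := by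
  have h := intervalIntegral.integral_eq_sub_of_hasDeriv_right_of_le zero_le_one
    (hu.mul hv) (fun x hx => ((hud x hx).mul (hvd x hx)).hasDerivWithinAt) hint
  simpa [hbv1, hbv0] using h

lemma peter_paul_aux (ε : ℝ) (hε : 0 < ε) (a b x : ℝ) (hx : 0 ≤ x) :
    -(a * b * x) ≤ ε * (b ^ 2 * x) + (1 / (4 * ε)) * (a ^ 2 * x) := by
  have h4 : (0:ℝ) < 4 * ε := by linarith
  have key : -(a * b * x) * (4 * ε) ≤ (ε * (b ^ 2 * x) + (1 / (4 * ε)) * (a ^ 2 * x)) * (4 * ε) := by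
    have expand : (ε * (b ^ 2 * x) + (1 / (4 * ε)) * (a ^ 2 * x)) * (4 * ε)
        = 4 * ε ^ 2 * b ^ 2 * x + a ^ 2 * x := by
      field_simp
    rw [expand]
    nlinarith [mul_nonneg hx (sq_nonneg (2 * ε * b + a))]
  exact le_of_mul_le_mul_right key h4

lemma young_aux (c a b : ℝ) (hc : 0 ≤ c) :
    -(c * a * b) ≤ (1/2) * (c * a ^ 2) + (1/2) * (c * b ^ 2) := by
  nlinarith [mul_nonneg hc (sq_nonneg (a + b))]

theorem adjoint_energy_estimate
    (χ : ℝ → ℝ) (hχ : ContDiffOn ℝ 1 χ (Set.Icc 0 1))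
    (hχ0 : ∀ x ∈ Set.Icc (0:ℝ) 1, 0 ≤ χ x)
    (α ε : ℝ) (hα : 0 < α) (hε : 0 < ε)
    (g : ℝ → ℝ) (hg : ContinuousOn g (Set.Icc 0 1))
    (p T : ℝ → ℝ)
    (hp : ContDiffOn ℝ 2 p (Set.Icc 0 1))
    (hT : ContDiffOn ℝ 2 T (Set.Icc 0 1))
    (hp1 : p 1 = 0) (hT1 : T 1 = 0)
    (heq : ∀ x ∈ Set.Icc (0:ℝ) 1,
      α⁻¹ * p x * x - deriv (fun y => y * χ y * deriv p y) x
        = deriv (fun y => y * χ y * deriv T y) x - g x * x) :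
    2 * (α⁻¹ - ε) * (∫ x in (0:ℝ)..1, (p x) ^ 2 * x)
      + (∫ x in (0:ℝ)..1, χ x * (deriv p x) ^ 2 * x)
    ≤ (∫ x in (0:ℝ)..1, χ x * (deriv T x) ^ 2 * x)
      + (1 / (2 * ε)) * (∫ x in (0:ℝ)..1, (g x) ^ 2 * x) := by
  have huniq : UniqueDiffOn ℝ (Set.Icc (0:ℝ) 1) := uniqueDiffOn_Icc zero_lt_one
  set s : Set ℝ := Set.Icc 0 1 with hs
  set p' : ℝ → ℝ := derivWithin p s with hp'def
  set T' : ℝ → ℝ := derivWithin T s with hT'def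
  set A : ℝ → ℝ := fun y => y * χ y * p' y with hAdef
  set B : ℝ → ℝ := fun y => y * χ y * T' y with hBdef
  set A' : ℝ → ℝ := derivWithin A s with hA'def
  set B' : ℝ → ℝ := derivWithin B s with hB'def
  -- smoothness
  have hp'c : ContDiffOn ℝ 1 p' s := hp.derivWithin (m := 1) huniq (by norm_num)
  have hT'c : ContDiffOn ℝ 1 T' s := hT.derivWithin (m := 1) huniq (by norm_num)
  have hA : ContDiffOn ℝ 1 A s := (contDiffOn_id.mul hχ).mul hp'c
  have hB : ContDiffOn ℝ 1 B s := (contDiffOn_id.mul hχ).mul hT'c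
  have hA'c : ContinuousOn A' s := (hA.derivWithin (m := 0) huniq (by norm_num)).continuousOn
  have hB'c : ContinuousOn B' s := (hB.derivWithin (m := 0) huniq (by norm_num)).continuousOn
  have hmem : ∀ x ∈ Set.Ioo (0:ℝ) 1, s ∈ nhds x := fun x hx => Icc_mem_nhds hx.1 hx.2
  -- derivatives at interior points
  have hasd : ∀ (f : ℝ → ℝ), ContDiffOn ℝ 1 f s →
      ∀ x ∈ Set.Ioo (0:ℝ) 1, HasDerivAt f (derivWithin f s x) x := by
    intro f hf x hx
    have h1 : DifferentiableAt ℝ f x :=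
      (hf.differentiableOn one_ne_zero).differentiableAt (hmem x hx)
    have h2 := h1.hasDerivAt
    rwa [← derivWithin_of_mem_nhds (hmem x hx)] at h2
  have hpd : ∀ x ∈ Set.Ioo (0:ℝ) 1, HasDerivAt p (p' x) x :=
    hasd p (hp.of_le one_le_two)
  have hAd : ∀ x ∈ Set.Ioo (0:ℝ) 1, HasDerivAt A (A' x) x := hasd A hA
  have hBd : ∀ x ∈ Set.Ioo (0:ℝ) 1, HasDerivAt B (B' x) x := hasd B hB
  have hdp : ∀ x ∈ Set.Ioo (0:ℝ) 1, deriv p x = p' x :=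
    fun x hx => (derivWithin_of_mem_nhds (hmem x hx)).symm
  have hdT : ∀ x ∈ Set.Ioo (0:ℝ) 1, deriv T x = T' x :=
    fun x hx => (derivWithin_of_mem_nhds (hmem x hx)).symm
  have hderivA : ∀ x ∈ Set.Ioo (0:ℝ) 1, deriv (fun y => y * χ y * deriv p y) x = A' x := by
    intro x hx
    have hIoo : Set.Ioo (0:ℝ) 1 ∈ nhds x := Ioo_mem_nhds hx.1 hx.2
    have hee : (fun y => y * χ y * deriv p y) =ᶠ[nhds x] A := by
      filter_upwards [hIoo] with y hy
      rw [hdp y hy]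
    rw [hee.deriv_eq, ← derivWithin_of_mem_nhds (hmem x hx)]
  have hderivB : ∀ x ∈ Set.Ioo (0:ℝ) 1, deriv (fun y => y * χ y * deriv T y) x = B' x := by
    intro x hx
    have hIoo : Set.Ioo (0:ℝ) 1 ∈ nhds x := Ioo_mem_nhds hx.1 hx.2
    have hee : (fun y => y * χ y * deriv T y) =ᶠ[nhds x] B := by
      filter_upwards [hIoo] with y hy
      rw [hdT y hy]
    rw [hee.deriv_eq, ← derivWithin_of_mem_nhds (hmem x hx)]
  -- integrability helpers
  have intgr : ∀ {f : ℝ → ℝ}, ContinuousOn f s →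
      IntervalIntegrable f MeasureTheory.volume 0 1 := by
    intro f hf
    apply ContinuousOn.intervalIntegrable
    rwa [Set.uIcc_of_le zero_le_one]
  have cp : ContinuousOn p s := hp.continuousOn
  have cp' : ContinuousOn p' s := hp'c.continuousOn
  have cT' : ContinuousOn T' s := hT'c.continuousOn
  have cA : ContinuousOn A s := hA.continuousOn
  have cB : ContinuousOn B s := hB.continuousOn
  have cx : ContinuousOn (fun x : ℝ => x) s := continuousOn_id
  -- a.e. membership in the open interval
  have hae : ∀ᵐ (x : ℝ), x ∈ Set.uIoc (0:ℝ) 1 → x ∈ Set.Ioo (0:ℝ) 1 := by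
    have h1 : ∀ᵐ (x : ℝ), x ≠ (1:ℝ) := by
      rw [MeasureTheory.ae_iff]
      simpa using MeasureTheory.measure_singleton (1:ℝ)
    filter_upwards [h1] with x hx1 hxI
    rw [Set.uIoc_of_le zero_le_one] at hxI
    exact ⟨hxI.1, lt_of_le_of_ne hxI.2 hx1⟩
  -- Step 1: the weak form of the equation
  have E1 : (∫ x in (0:ℝ)..1, (α⁻¹ * ((p x) ^ 2 * x) - p x * A' x))
      = ∫ x in (0:ℝ)..1, (p x * B' x - g x * p x * x) := by
    apply intervalIntegral.integral_congr_ae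
    filter_upwards [hae] with x hxae hxI
    have hx := hxae hxI
    have h := heq x (Set.mem_Icc.mpr ⟨le_of_lt hx.1, le_of_lt hx.2⟩)
    rw [hderivA x hx, hderivB x hx] at h
    linear_combination (p x) * h
  -- Step 2: integration by parts
  have ibpA : (∫ x in (0:ℝ)..1, (p' x * A x + p x * A' x)) = 0 := by
    apply ibp_zero_aux p A p' A' cp cA hpd hAd
    · exact intgr ((cp'.mul cA).add (cp.mul hA'c))
    · simp [hp1]
    · simp [hAdef]
  have ibpB : (∫ x in (0:ℝ)..1, (p' x * B x + p x * B' x)) = 0 := by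
    apply ibp_zero_aux p B p' B' cp cB hpd hBd
    · exact intgr ((cp'.mul cB).add (cp.mul hB'c))
    · simp [hp1]
    · simp [hBdef]
  have hIpA' : (∫ x in (0:ℝ)..1, p x * A' x) = -(∫ x in (0:ℝ)..1, p' x * A x) := by
    have h := intervalIntegral.integral_add (intgr (f := fun x => p' x * A x) (cp'.mul cA)) (intgr (f := fun x => p x * A' x) (cp.mul hA'c))
    rw [ibpA] at h
    linarith [h.symm]
  have hIpB' : (∫ x in (0:ℝ)..1, p x * B' x) = -(∫ x in (0:ℝ)..1, p' x * B x) := by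
    have h := intervalIntegral.integral_add (intgr (f := fun x => p' x * B x) (cp'.mul cB)) (intgr (f := fun x => p x * B' x) (cp.mul hB'c))
    rw [ibpB] at h
    linarith [h.symm]
  -- Step 3: split E1
  have lhs1 : (∫ x in (0:ℝ)..1, (α⁻¹ * ((p x) ^ 2 * x) - p x * A' x))
      = α⁻¹ * (∫ x in (0:ℝ)..1, (p x) ^ 2 * x) + (∫ x in (0:ℝ)..1, p' x * A x) := by
    rw [intervalIntegral.integral_sub
        (intgr (f := fun x => α⁻¹ * ((p x) ^ 2 * x)) (continuousOn_const.mul ((cp.pow 2).mul cx)))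
          (intgr (f := fun x => p x * A' x) (cp.mul hA'c)),
      hIpA', intervalIntegral.integral_const_mul]
    ring
  have rhs1 : (∫ x in (0:ℝ)..1, (p x * B' x - g x * p x * x))
      = -(∫ x in (0:ℝ)..1, p' x * B x) - (∫ x in (0:ℝ)..1, g x * p x * x) := by
    rw [intervalIntegral.integral_sub (intgr (f := fun x => p x * B' x) (cp.mul hB'c))
      (intgr (f := fun x => g x * p x * x) ((hg.mul cp).mul cx)), hIpB']
  have main0 : α⁻¹ * (∫ x in (0:ℝ)..1, (p x) ^ 2 * x) + (∫ x in (0:ℝ)..1, p' x * A x)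
      = -(∫ x in (0:ℝ)..1, p' x * B x) - (∫ x in (0:ℝ)..1, g x * p x * x) := by
    rw [← lhs1, ← rhs1, E1]
  -- Step 4: bound the right-hand side
  have expand2 : -(∫ x in (0:ℝ)..1, p' x * B x) - (∫ x in (0:ℝ)..1, g x * p x * x)
      = ∫ x in (0:ℝ)..1, (-(p' x * B x) - g x * p x * x) := by
    rw [intervalIntegral.integral_sub (intgr (f := fun x => -(p' x * B x)) (cp'.mul cB).neg)
      (intgr (f := fun x => g x * p x * x) ((hg.mul cp).mul cx)),
      intervalIntegral.integral_neg]
  have mono : (∫ x in (0:ℝ)..1, (-(p' x * B x) - g x * p x * x))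
      ≤ ∫ x in (0:ℝ)..1, ((1/2) * (p' x * A x) + (1/2) * (T' x * B x)
          + ε * ((p x) ^ 2 * x) + (1/(4*ε)) * ((g x) ^ 2 * x)) := by
    apply intervalIntegral.integral_mono_on zero_le_one
    · exact intgr (((cp'.mul cB).neg).sub ((hg.mul cp).mul cx))
    · exact intgr ((((continuousOn_const.mul (cp'.mul cA)).add
        (continuousOn_const.mul (cT'.mul cB))).add
        (continuousOn_const.mul ((cp.pow 2).mul cx))).add
        (continuousOn_const.mul ((hg.pow 2).mul cx)))
    · intro x hx
      have hx0 : (0:ℝ) ≤ x := hx.1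
      have hc : 0 ≤ x * χ x := mul_nonneg hx0 (hχ0 x hx)
      have h1 := young_aux (x * χ x) (p' x) (T' x) hc
      have h2 := peter_paul_aux ε hε (g x) (p x) x hx0
      simp only [hAdef, hBdef]
      nlinarith [h1, h2]
  have hsum : (∫ x in (0:ℝ)..1, ((1/2) * (p' x * A x) + (1/2) * (T' x * B x)
          + ε * ((p x) ^ 2 * x) + (1/(4*ε)) * ((g x) ^ 2 * x)))
      = (1/2) * (∫ x in (0:ℝ)..1, p' x * A x) + (1/2) * (∫ x in (0:ℝ)..1, T' x * B x)
        + ε * (∫ x in (0:ℝ)..1, (p x) ^ 2 * x) + (1/(4*ε)) * (∫ x in (0:ℝ)..1, (g x) ^ 2 * x) := by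
    have i1 : IntervalIntegrable (fun x => (1/2 : ℝ) * (p' x * A x)) MeasureTheory.volume 0 1 :=
      intgr (continuousOn_const.mul (cp'.mul cA))
    have i2 : IntervalIntegrable (fun x => (1/2 : ℝ) * (T' x * B x)) MeasureTheory.volume 0 1 :=
      intgr (continuousOn_const.mul (cT'.mul cB))
    have i3 : IntervalIntegrable (fun x => ε * ((p x) ^ 2 * x)) MeasureTheory.volume 0 1 :=
      intgr (continuousOn_const.mul ((cp.pow 2).mul cx))
    have i4 : IntervalIntegrable (fun x => (1/(4*ε)) * ((g x) ^ 2 * x)) MeasureTheory.volume 0 1 :=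
      intgr (continuousOn_const.mul ((hg.pow 2).mul cx))
    rw [intervalIntegral.integral_add ((i1.add i2).add i3) i4,
      intervalIntegral.integral_add (i1.add i2) i3,
      intervalIntegral.integral_add i1 i2,
      intervalIntegral.integral_const_mul, intervalIntegral.integral_const_mul,
      intervalIntegral.integral_const_mul, intervalIntegral.integral_const_mul]
  -- convert the target's deriv-integrals
  have hQeq : (∫ x in (0:ℝ)..1, χ x * (deriv p x) ^ 2 * x) = ∫ x in (0:ℝ)..1, p' x * A x := by
    apply intervalIntegral.integral_congr_ae
    filter_upwards [hae] with x hxae hxI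
    have hx := hxae hxI
    rw [hdp x hx]
    simp only [hAdef]
    ring
  have hReq : (∫ x in (0:ℝ)..1, χ x * (deriv T x) ^ 2 * x) = ∫ x in (0:ℝ)..1, T' x * B x := by
    apply intervalIntegral.integral_congr_ae
    filter_upwards [hae] with x hxae hxI
    have hx := hxae hxI
    rw [hdT x hx]
    simp only [hBdef]
    ring
  rw [hQeq, hReq]
  have main : α⁻¹ * (∫ x in (0:ℝ)..1, (p x) ^ 2 * x) + (∫ x in (0:ℝ)..1, p' x * A x)
      ≤ (1/2) * (∫ x in (0:ℝ)..1, p' x * A x) + (1/2) * (∫ x in (0:ℝ)..1, T' x * B x)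
        + ε * (∫ x in (0:ℝ)..1, (p x) ^ 2 * x)
        + (1/(4*ε)) * (∫ x in (0:ℝ)..1, (g x) ^ 2 * x) := by
    rw [main0, expand2, ← hsum]
    exact mono
  have hGone : (1/(2*ε)) * (∫ x in (0:ℝ)..1, (g x) ^ 2 * x)
      = 2 * ((1/(4*ε)) * (∫ x in (0:ℝ)..1, (g x) ^ 2 * x)) := by
    rw [← mul_assoc]
    congr 1
    field_simp
    ring
  linarith [main, hGone]
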